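/- Let M be a Riemannian manifold with volume V and f: M → M a diffeomorphism such that for every measurable set A with 0 < V(A) < ∞ one has V(f(A)) < V(A). Then the set of points whose backward orbit under f does not tend to infinity has V-measure zero. -/

import Mathlib

open MeasureTheory Set Filter Function
set_option linter.unusedSectionVars false

section Aux
variable {M : Type*} [TopologicalSpace M] [MeasurableSpace M] [BorelSpace M]

-- image under iterate of f is preimage under iterate of f.symm
lemma iter_image_eq_preimage (f : M ≃ₜ M) (n : ℕ) (A : Set M) :
    (f : M → M)^[n] '' A = (f.symm : M → M)^[n] ⁻¹' A := by
  have h1 : Function.LeftInverse (f.symm : M → M) (f : M → M) := f.symm_apply_apply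
  have h2 : Function.RightInverse (f.symm : M → M) (f : M → M) := f.apply_symm_apply
  exact congrFun (Set.image_eq_preimage_of_inverse (h1.iterate n) (h2.iterate n)) A

lemma symm_iter_image_eq_preimage (f : M ≃ₜ M) (n : ℕ) (A : Set M) :
    (f.symm : M → M)^[n] '' A = (f : M → M)^[n] ⁻¹' A := by
  simpa using iter_image_eq_preimage f.symm n A

lemma iter_image_measurable (f : M ≃ₜ M) (n : ℕ) {A : Set M} (hA : MeasurableSet A) :
    MeasurableSet ((f : M → M)^[n] '' A) := by
  rw [iter_image_eq_preimage]
  exact (f.symm.continuous.measurable.iterate n) hA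

lemma symm_iter_image_measurable (f : M ≃ₜ M) (n : ℕ) {A : Set M} (hA : MeasurableSet A) :
    MeasurableSet ((f.symm : M → M)^[n] '' A) := by
  rw [symm_iter_image_eq_preimage]
  exact (f.continuous.measurable.iterate n) hA

lemma aux_image_le (μ : Measure M) (f : M ≃ₜ M)
    (hcontr : ∀ A : Set M, MeasurableSet A → 0 < μ A → μ A < ⊤ → μ (f '' A) < μ A)
    {A : Set M} (hA : MeasurableSet A) (hfin : μ ((f : M → M) '' A) < ⊤) :
    μ ((f : M → M) '' A) ≤ μ A := by
  by_cases h0 : μ A = 0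
  · by_contra hlt
    push_neg at hlt
    rw [h0] at hlt
    set B := A ∪ (f : M → M) '' A with hB
    have hBmeas : MeasurableSet B := hA.union (by simpa using iter_image_measurable f 1 hA)
    have hBle : μ B ≤ μ ((f : M → M) '' A) := by
      calc μ B ≤ μ A + μ ((f : M → M) '' A) := measure_union_le _ _
      _ = μ ((f : M → M) '' A) := by rw [h0, zero_add]
    have hBge : μ ((f : M → M) '' A) ≤ μ B := measure_mono subset_union_right
    have hc := hcontr B hBmeas (lt_of_lt_of_le hlt hBge) (lt_of_le_of_lt hBle hfin)
    have : μ ((f : M → M) '' A) ≤ μ ((f : M → M) '' B) :=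
      measure_mono (Set.image_mono (subset_union_left : A ⊆ B))
    exact absurd (lt_of_le_of_lt this (lt_of_lt_of_le hc hBle)) (lt_irrefl _)
  · rcases eq_or_ne (μ A) ⊤ with htop | htop
    · exact htop ▸ le_top
    · exact (hcontr A hA (pos_iff_ne_zero.mpr h0) (lt_top_iff_ne_top.mpr htop)).le

lemma iter_comp_symm (f : M ≃ₜ M) {k i : ℕ} (hik : i ≤ k) (A : Set M) :
    (f : M → M)^[i] '' ((f.symm : M → M)^[k] '' A) = (f.symm : M → M)^[k - i] '' A := by
  have h2 : Function.LeftInverse (f : M → M) (f.symm : M → M) := f.apply_symm_apply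
  have hfun : ∀ x, (f : M → M)^[i] ((f.symm : M → M)^[k] x) = (f.symm : M → M)^[k - i] x := by
    intro x
    have hx : (f.symm : M → M)^[k] x = (f.symm : M → M)^[i] ((f.symm : M → M)^[k - i] x) := by
      rw [← Function.iterate_add_apply, Nat.add_sub_cancel' hik]
    rw [hx, (h2.iterate i) _]
  rw [← Set.image_comp]
  exact Set.image_congr fun x _ => hfun x

lemma aux_iter_le (μ : Measure M) (f : M ≃ₜ M)
    (hcontr : ∀ A : Set M, MeasurableSet A → 0 < μ A → μ A < ⊤ → μ (f '' A) < μ A) :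
    ∀ (n : ℕ) (A : Set M), MeasurableSet A →
    (∀ i, i ≤ n → μ ((f : M → M)^[i] '' A) < ⊤) → μ ((f : M → M)^[n] '' A) ≤ μ A := by
  intro n
  induction n with
  | zero => intro A _ _; simp
  | succ n ih =>
    intro A hA hfin
    have hstep : (f : M → M)^[n + 1] '' A = (f : M → M) '' ((f : M → M)^[n] '' A) := by
      rw [Function.iterate_succ', Set.image_comp]
    calc μ ((f : M → M)^[n + 1] '' A) ≤ μ ((f : M → M)^[n] '' A) := by
          rw [hstep]
          exact aux_image_le μ f hcontr (iter_image_measurable f n hA)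
            (hstep ▸ hfin (n + 1) le_rfl)
      _ ≤ μ A := ih A hA fun i hi => hfin i (hi.trans (Nat.le_succ n))

lemma aux_iter_strict (μ : Measure M) (f : M ≃ₜ M)
    (hcontr : ∀ A : Set M, MeasurableSet A → 0 < μ A → μ A < ⊤ → μ (f '' A) < μ A)
    (n : ℕ) (A : Set M) (hA : MeasurableSet A)
    (hfin : ∀ i, i ≤ n + 1 → μ ((f : M → M)^[i] '' A) < ⊤)
    (hpos : 0 < μ ((f : M → M)^[n + 1] '' A)) :
    μ ((f : M → M)^[n + 1] '' A) < μ A := by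
  have hstep : (f : M → M)^[n + 1] '' A = (f : M → M) '' ((f : M → M)^[n] '' A) := by
    rw [Function.iterate_succ', Set.image_comp]
  have hposn : 0 < μ ((f : M → M)^[n] '' A) := by
    by_contra h
    push_neg at h
    have h0 : μ ((f : M → M)^[n] '' A) = 0 := le_antisymm h zero_le
    have hle := aux_image_le μ f hcontr (iter_image_measurable f n hA)
      (hstep ▸ hfin (n + 1) le_rfl)
    rw [hstep] at hpos
    exact absurd (lt_of_lt_of_le hpos (hle.trans h0.le)) (lt_irrefl _)
  calc μ ((f : M → M)^[n + 1] '' A) = μ ((f : M → M) '' ((f : M → M)^[n] '' A)) := by rw [hstep]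
    _ < μ ((f : M → M)^[n] '' A) :=
        hcontr _ (iter_image_measurable f n hA) hposn (hfin n (Nat.le_succ n))
    _ ≤ μ A := aux_iter_le μ f hcontr n A hA fun i hi => hfin i (hi.trans (Nat.le_succ n))

lemma iter_apply_symm (f : M ≃ₜ M) {k i : ℕ} (hik : i ≤ k) (x : M) :
    (f : M → M)^[i] ((f.symm : M → M)^[k] x) = (f.symm : M → M)^[k - i] x := by
  have h2 : Function.LeftInverse (f : M → M) (f.symm : M → M) := f.apply_symm_apply
  have hx : (f.symm : M → M)^[k] x = (f.symm : M → M)^[i] ((f.symm : M → M)^[k - i] x) := by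
    rw [← Function.iterate_add_apply, Nat.add_sub_cancel' hik]
  rw [hx, (h2.iterate i) _]

lemma aux_compact_null (μ : Measure M) [IsFiniteMeasureOnCompacts μ] [T2Space M] (f : M ≃ₜ M)
    (hcontr : ∀ A : Set M, MeasurableSet A → 0 < μ A → μ A < ⊤ → μ (f '' A) < μ A)
    {K : Set M} (hK : IsCompact K) :
    μ {x : M | ∃ᶠ n in atTop, (f.symm : M → M)^[n] x ∈ K} = 0 := by
  classical
  set g : M → M := (f.symm : M → M) with hg
  set B : Set M := {x : M | ∃ᶠ n in atTop, g^[n] x ∈ K} with hBdef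
  have hKm : MeasurableSet K := hK.isClosed.measurableSet
  have hgmeas : Measurable g := f.symm.continuous.measurable
  -- invariance of B under g
  have hinv : ∀ x ∈ B, ∀ n : ℕ, g^[n] x ∈ B := by
    intro x hx n
    simp only [hBdef, mem_setOf_eq, frequently_atTop] at hx ⊢
    intro N
    obtain ⟨m, hm, hmK⟩ := hx (N + n)
    refine ⟨m - n, by omega, ?_⟩
    have hmn : m - n + n = m := by omega
    rw [← Function.iterate_add_apply, hmn]
    exact hmK
  have hBmeas : MeasurableSet B := by
    have hBeq : B = ⋂ N : ℕ, ⋃ n : ℕ, ⋃ _ : N ≤ n, g^[n] ⁻¹' K := by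
      ext x
      simp [hBdef, frequently_atTop]
    rw [hBeq]
    exact MeasurableSet.iInter fun N => MeasurableSet.iUnion fun n =>
      MeasurableSet.iUnion fun _ => (hgmeas.iterate n) hKm
  set C : Set M := B ∩ K with hCdef
  have hCmeas : MeasurableSet C := hBmeas.inter hKm
  have hCfin : μ C < ⊤ := lt_of_le_of_lt (measure_mono inter_subset_right) hK.measure_lt_top
  have hCK : C ⊆ K := inter_subset_right
  -- every point of C returns to C
  have hret : ∀ y ∈ C, ∃ k : ℕ, 0 < k ∧ g^[k] y ∈ C := by
    intro y hy
    have hyB : y ∈ B := hy.1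
    have hfreq : ∀ N : ℕ, ∃ n, N ≤ n ∧ g^[n] y ∈ K := by
      have := hyB
      simp only [hBdef, mem_setOf_eq, frequently_atTop] at this
      exact fun N => (this N).imp fun n hn => ⟨hn.1, hn.2⟩
    obtain ⟨k, hk1, hkK⟩ := hfreq 1
    exact ⟨k, hk1, ⟨hinv y hyB k, hkK⟩⟩
  -- first-return decomposition
  set D : ℕ → Set M := fun m =>
    C ∩ g^[m + 1] ⁻¹' C ∩ ⋂ (i : ℕ), ⋂ (_ : 0 < i ∧ i < m + 1), (g^[i] ⁻¹' C)ᶜ with hDdef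
  have hmemD : ∀ m y, y ∈ D m ↔
      y ∈ C ∧ g^[m + 1] y ∈ C ∧ ∀ i, 0 < i → i < m + 1 → g^[i] y ∉ C := by
    intro m y
    simp [hDdef, mem_iInter, and_imp, and_assoc]
  have hDsub : ∀ m, D m ⊆ C := fun m y hy => ((hmemD m y).mp hy).1
  have hDmeas : ∀ m, MeasurableSet (D m) := by
    intro m
    refine (hCmeas.inter ((hgmeas.iterate (m + 1)) hCmeas)).inter ?_
    exact MeasurableSet.iInter fun i => MeasurableSet.iInter fun _ =>
      ((hgmeas.iterate i) hCmeas).compl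
  have hcover : C ⊆ ⋃ m, D m := by
    intro y hy
    have hex := hret y hy
    have hk := Nat.find_spec hex
    have hkpos : 0 < Nat.find hex := hk.1
    refine mem_iUnion.mpr ⟨Nat.find hex - 1, (hmemD _ y).mpr ⟨hy, ?_, ?_⟩⟩
    · have h1 : Nat.find hex - 1 + 1 = Nat.find hex := by omega
      rw [h1]; exact hk.2
    · intro i hi0 hik hiC
      have h1 : i < Nat.find hex := by omega
      exact Nat.find_min hex h1 ⟨hi0, hiC⟩
  have hUD : ⋃ m, D m = C := Subset.antisymm (iUnion_subset hDsub) hcover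
  have hkey : ∀ a b, a < b → ∀ y, y ∈ D a → y ∈ D b → False := by
    intro a b hab y hya hyb
    exact ((hmemD b y).mp hyb).2.2 (a + 1) (Nat.succ_pos a) (by omega) ((hmemD a y).mp hya).2.1
  have hDdisj : Pairwise (Function.onFun Disjoint D) := by
    intro a b hab
    rcases hab.lt_or_gt with h | h
    · exact Set.disjoint_left.mpr fun y hy hy' => hkey a b h y hy hy'
    · exact Set.disjoint_left.mpr fun y hy hy' => hkey b a h y hy' hy
  -- the first-return images
  set E : ℕ → Set M := fun m => g^[m + 1] '' D m with hEdef
  have hEsub : ∀ m, E m ⊆ C := by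
    rintro m x ⟨y, hy, rfl⟩
    exact ((hmemD m y).mp hy).2.1
  have hEmeas : ∀ m, MeasurableSet (E m) := fun m =>
    symm_iter_image_measurable f (m + 1) (hDmeas m)
  have hEdisj : Pairwise (Function.onFun Disjoint E) := by
    have key : ∀ a b, a < b → ∀ x, x ∈ E a → x ∈ E b → False := by
      rintro a b hab x ⟨y, hy, rfl⟩ ⟨z, hz, hzx⟩
      -- g^[a+1] y = g^[b+1] z ; apply f^[a+1]
      have hy' : y = (f : M → M)^[a + 1] (g^[b + 1] z) := by
        rw [hzx, iter_apply_symm f le_rfl, Nat.sub_self, Function.iterate_zero_apply]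
      have hyz : y = g^[b - a] z := by
        rw [hy', iter_apply_symm f (by omega)]
        congr 1
        omega
      have : g^[b - a] z ∈ C := hyz ▸ ((hmemD a y).mp hy).1
      exact ((hmemD b z).mp hz).2.2 (b - a) (by omega) (by omega) this
    intro a b hab
    rcases hab.lt_or_gt with h | h
    · exact Set.disjoint_left.mpr fun x hx hx' => key a b h x hx hx'
    · exact Set.disjoint_left.mpr fun x hx hx' => key b a h x hx' hx
  -- finiteness of iterated images of E m
  have hfinE : ∀ m, ∀ i, i ≤ m + 1 → μ ((f : M → M)^[i] '' E m) < ⊤ := by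
    intro m i hi
    have h1 : (f : M → M)^[i] '' E m = g^[m + 1 - i] '' D m := by
      rw [hEdef]
      exact iter_comp_symm f hi (D m)
    have h2 : (f : M → M)^[i] '' E m ⊆ g^[m + 1 - i] '' K := by
      rw [h1]
      exact Set.image_mono fun y hy => hCK (hDsub m hy)
    calc μ ((f : M → M)^[i] '' E m) ≤ μ (g^[m + 1 - i] '' K) := measure_mono h2
      _ < ⊤ := (hK.image ((f.symm.continuous).iterate (m + 1 - i))).measure_lt_top
  have hfE : ∀ m, (f : M → M)^[m + 1] '' E m = D m := by
    intro m
    rw [hEdef]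
    rw [iter_comp_symm f le_rfl, Nat.sub_self]
    simp
  -- measure comparison
  have hDE_le : ∀ m, μ (D m) ≤ μ (E m) := by
    intro m
    have := aux_iter_le μ f hcontr (m + 1) (E m) (hEmeas m) (hfinE m)
    rwa [hfE m] at this
  have hD0 : ∀ m, μ (D m) = 0 := by
    by_contra h
    push_neg at h
    obtain ⟨m, hm⟩ := h
    have hstrict : μ (D m) < μ (E m) := by
      have := aux_iter_strict μ f hcontr m (E m) (hEmeas m) (hfinE m)
        (by rw [hfE m]; exact pos_iff_ne_zero.mpr hm)
      rwa [hfE m] at this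
    have hsumD : ∑' m, μ (D m) = μ C := by rw [← measure_iUnion hDdisj hDmeas, hUD]
    have hsumE : ∑' m, μ (E m) ≤ μ C := by
      rw [← measure_iUnion hEdisj hEmeas]
      exact measure_mono (iUnion_subset hEsub)
    have hlt : ∑' j, μ (D j) < ∑' j, μ (E j) :=
      ENNReal.tsum_lt_tsum (by rw [hsumD]; exact hCfin.ne) hDE_le hstrict
    rw [hsumD] at hlt
    exact absurd (lt_of_lt_of_le hlt hsumE) (lt_irrefl _)
  have hC0 : μ C = 0 := by
    rw [← hUD]
    exact measure_iUnion_null fun m => measure_mono_null (subset_refl _) (hD0 m)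
  -- B is covered by forward images of C
  have hBsub : B ⊆ ⋃ n : ℕ, (f : M → M)^[n] '' C := by
    intro x hx
    have hfreq : ∀ N : ℕ, ∃ n, N ≤ n ∧ g^[n] x ∈ K := by
      have := hx
      simp only [hBdef, mem_setOf_eq, frequently_atTop] at this
      exact fun N => (this N).imp fun n hn => ⟨hn.1, hn.2⟩
    obtain ⟨n, _, hnK⟩ := hfreq 0
    refine mem_iUnion.mpr ⟨n, ?_⟩
    rw [iter_image_eq_preimage]
    exact ⟨hinv x hx n, hnK⟩
  refine measure_mono_null hBsub (measure_iUnion_null fun n => ?_)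
  have hfin : ∀ i, i ≤ n → μ ((f : M → M)^[i] '' C) < ⊤ := by
    intro i _
    calc μ ((f : M → M)^[i] '' C) ≤ μ ((f : M → M)^[i] '' K) :=
          measure_mono (Set.image_mono hCK)
      _ < ⊤ := (hK.image ((f.continuous).iterate i)).measure_lt_top
  have := aux_iter_le μ f hcontr n C hCmeas hfin
  exact le_antisymm (this.trans hC0.le) zero_le


end Aux


/-- Let `M` be a Riemannian manifold (abstractly: a locally compact, σ-compact space with a
Borel measure `μ` finite on compacts) and `f` a diffeomorphism which strictly contracts the
volume of every measurable set of finite positive volume. Then the set of points whose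
backward orbit does not tend to infinity has measure zero. -/
theorem backward_nonescaping_set_null_of_strict_contraction
    {M : Type*} [TopologicalSpace M] [MeasurableSpace M] [BorelSpace M]
    [T2Space M] [LocallyCompactSpace M] [SigmaCompactSpace M]
    (μ : Measure M) [IsFiniteMeasureOnCompacts μ]
    (f : M ≃ₜ M)
    (hcontr : ∀ A : Set M, MeasurableSet A → 0 < μ A → μ A < ⊤ → μ (f '' A) < μ A) :
    μ {x : M | ¬ ∀ K : Set M, IsCompact K →
        ∀ᶠ n : ℕ in atTop, (f.symm : M → M)^[n] x ∉ K} = 0 := by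
  set E : CompactExhaustion M := CompactExhaustion.choice M with hE
  refine measure_mono_null (?_ :
      _ ⊆ ⋃ i : ℕ, {x : M | ∃ᶠ n in atTop, (f.symm : M → M)^[n] x ∈ E i})
    (measure_iUnion_null fun i => aux_compact_null μ f hcontr (E.isCompact i))
  intro x hx
  simp only [mem_setOf_eq, not_forall] at hx
  obtain ⟨K, hK, hne⟩ := hx
  rw [Filter.not_eventually] at hne
  simp only [not_not] at hne
  obtain ⟨i, hKi⟩ := E.exists_superset_of_isCompact hK
  exact mem_iUnion.mpr ⟨i, hne.mono fun n hn => hKi hn⟩
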